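/- arXiv:2308.05488 — 2 statements merged into one kernel-verified Lean document; each statement's English description precedes it below -/
import Mathlib

section
/- Let (A, B, C, D) be a stable unitary realization with state dimension n and input/output dimension m = 1 (so C is a 1×n matrix), let φ be a finite Blaschke product of degree d with d < n, and let φ̃ denote its conjugate Blaschke product, so that φ̃(A) = (φ(Aᴴ))ᴴ. Suppose x ∈ ℂⁿ is a nonzero vector with φ̃(A)ᴴ φ̃(A) x = x. Then φ̃(A) x ≠ 0 and for every z ∈ ℂ with |z| < 1 one has C (I − z·A)⁻¹ x = φ(z) · ( C (I − z·A)⁻¹ (φ̃(A) x) ); consequently φ(z) = (C (I − z·A)⁻¹ x) / (C (I − z·A)⁻¹ φ̃(A) x) wherever the denominator is nonzero. -/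
open Matrix

/-- The finite Blaschke product determined by the unimodular constant `ζ` and the
zeros `α 0, …, α (d-1)` in the open unit disc. -/
noncomputable def blaschkeFun {d : ℕ} (ζ : ℂ) (α : Fin d → ℂ) (z : ℂ) : ℂ :=
  ζ * ∏ k : Fin d, (z - α k) / (1 - (starRingEnd ℂ) (α k) * z)

/-- `φ(A)` for the finite Blaschke product `φ` determined by `ζ` and `α`. -/
noncomputable def blaschkeMatrix {n d : ℕ} (ζ : ℂ) (α : Fin d → ℂ)
    (A : Matrix (Fin n) (Fin n) ℂ) : Matrix (Fin n) (Fin n) ℂ :=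
  ζ • (List.ofFn fun k : Fin d =>
    (A - α k • 1) * (1 - (starRingEnd ℂ) (α k) • A)⁻¹).prod

namespace BlaschkeAux

noncomputable def s {m : Type*} [Fintype m] (v : m → ℂ) : ℝ := (star v ⬝ᵥ v).re

lemma s_eq_sum {m : Type*} [Fintype m] (v : m → ℂ) :
    s v = ∑ i, Complex.normSq (v i) := by
  simp [s, dotProduct, ← Complex.normSq_eq_conj_mul_self]

lemma dot_self_eq {m : Type*} [Fintype m] (v : m → ℂ) :
    star v ⬝ᵥ v = (s v : ℂ) := by
  rw [s_eq_sum]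
  push_cast
  simp [dotProduct, ← Complex.normSq_eq_conj_mul_self]

lemma s_nonneg {m : Type*} [Fintype m] (v : m → ℂ) : 0 ≤ s v := by
  rw [s_eq_sum]; exact Finset.sum_nonneg fun i _ => Complex.normSq_nonneg _

lemma s_eq_zero {m : Type*} [Fintype m] {v : m → ℂ} (h : s v = 0) : v = 0 := by
  rw [s_eq_sum] at h
  funext i
  have := (Finset.sum_eq_zero_iff_of_nonneg (fun i _ => Complex.normSq_nonneg (v i))).mp h i (Finset.mem_univ i)
  simpa using Complex.normSq_eq_zero.mp this

lemma s_smul {m : Type*} [Fintype m] (c : ℂ) (v : m → ℂ) :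
    s (c • v) = Complex.normSq c * s v := by
  simp [s_eq_sum, Complex.normSq_mul, Finset.mul_sum]

lemma star_dot_mulVec {p q : Type*} [Fintype p] [Fintype q] (M : Matrix p q ℂ)
    (u : q → ℂ) (y : p → ℂ) : star u ⬝ᵥ (Mᴴ *ᵥ y) = star (M *ᵥ u) ⬝ᵥ y := by
  rw [star_mulVec, dotProduct_mulVec]

variable {n : ℕ} (A : Matrix (Fin n) (Fin n) ℂ) (C : Matrix (Fin 1) (Fin n) ℂ)

/-- the Blaschke factor `(A - ᾱ)(1 - αA)⁻¹`. -/
noncomputable def Fm (α : ℂ) : Matrix (Fin n) (Fin n) ℂ :=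
  (A - (starRingEnd ℂ) α • 1) * (1 - α • A)⁻¹


lemma conjT_factor (α : ℂ) : (A - (starRingEnd ℂ) α • 1)ᴴ = Aᴴ - α • 1 := by
  simp [conjTranspose_sub, conjTranspose_smul]

lemma conjT_den (α : ℂ) : ((1 : Matrix (Fin n) (Fin n) ℂ) - α • A)ᴴ = 1 - (starRingEnd ℂ) α • Aᴴ := by
  simp [conjTranspose_sub, conjTranspose_smul]

lemma den_ne_zero {α z : ℂ} (hα : ‖α‖ < 1) (hz : ‖z‖ < 1) :
    1 - (starRingEnd ℂ) α * z ≠ 0 := by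
  intro h
  have h1 : (starRingEnd ℂ) α * z = 1 := by linear_combination -h
  have h2 : ‖(starRingEnd ℂ) α * z‖ < 1 := by
    rw [norm_mul, RCLike.norm_conj]
    nlinarith [norm_nonneg α, norm_nonneg z]
  rw [h1] at h2
  simp at h2

section withAC

variable (hAC : Aᴴ * A + Cᴴ * C = 1)
include hAC

lemma s_A_mulVec (v : Fin n → ℂ) : s (A *ᵥ v) = s v - s (C *ᵥ v) := by
  have key : (s (A *ᵥ v) : ℂ) = (s v : ℂ) - (s (C *ᵥ v) : ℂ) := by
    have hA' : Aᴴ * A = 1 - Cᴴ * C := by rw [← hAC]; abel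
    have h2 : (Aᴴ * A) *ᵥ v = v - (Cᴴ * C) *ᵥ v := by
      rw [hA', sub_mulVec, one_mulVec]
    rw [← dot_self_eq, ← dot_self_eq, ← dot_self_eq,
      ← star_dot_mulVec A v (A *ᵥ v), ← star_dot_mulVec C v (C *ᵥ v),
      mulVec_mulVec, mulVec_mulVec, h2, dotProduct_sub]
  exact_mod_cast key

lemma s_A_le (v : Fin n → ℂ) : s (A *ᵥ v) ≤ s v := by
  rw [s_A_mulVec A C hAC]
  linarith [s_nonneg (C *ᵥ v)]

lemma det_unit {c : ℂ} (hc : ‖c‖ < 1) : IsUnit (1 - c • A).det := by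
  by_contra h
  rw [isUnit_iff_ne_zero, not_not] at h
  obtain ⟨v, hv, hv0⟩ := Matrix.exists_mulVec_eq_zero_iff.mpr h
  have hveq : v = c • (A *ᵥ v) := by
    have := hv0
    rw [sub_mulVec, one_mulVec, smul_mulVec, sub_eq_zero] at this
    exact this
  have hsv : s v ≤ Complex.normSq c * s v := by
    calc s v = Complex.normSq c * s (A *ᵥ v) := by rw [← s_smul, ← hveq]
    _ ≤ Complex.normSq c * s v :=
      mul_le_mul_of_nonneg_left (s_A_le A C hAC v) (Complex.normSq_nonneg c)
  have hc2 : Complex.normSq c < 1 := by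
    have h' : Complex.normSq c = ‖c‖ ^ 2 := by
      rw [Complex.normSq_eq_norm_sq]
    nlinarith [norm_nonneg c]
  have hsv0 : s v = 0 := by nlinarith [s_nonneg v]
  exact hv (s_eq_zero hsv0)

lemma key_identity (α : ℂ) :
    (Aᴴ - α • 1) * (A - (starRingEnd ℂ) α • 1) =
      (1 - (starRingEnd ℂ) α • Aᴴ) * (1 - α • A)
        - (1 - α * (starRingEnd ℂ) α) • (Cᴴ * C) := by
  have hC : Cᴴ * C = 1 - Aᴴ * A := by rw [← hAC]; abel
  rw [hC]
  simp only [Matrix.mul_sub, Matrix.sub_mul, Matrix.smul_mul, Matrix.mul_smul,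
    smul_smul, Matrix.one_mul, Matrix.mul_one, smul_sub, sub_smul, one_smul]
  module


lemma s_Fm {α : ℂ} (hα : ‖α‖ < 1) (w : Fin n → ℂ) :
    s (Fm A α *ᵥ w) = s w - (1 - Complex.normSq α) * s (C *ᵥ ((1 - α • A)⁻¹ *ᵥ w)) := by
  set u := (1 - α • A)⁻¹ *ᵥ w with hu
  have hu1 : (1 - α • A) *ᵥ u = w := by
    rw [hu, mulVec_mulVec, mul_nonsing_inv _ (det_unit A C hAC hα), one_mulVec]
  have hFw : Fm A α *ᵥ w = (A - (starRingEnd ℂ) α • 1) *ᵥ u := by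
    rw [Fm, ← mulVec_mulVec, hu]
  have key : (s (Fm A α *ᵥ w) : ℂ) =
      (s w : ℂ) - ((1 - Complex.normSq α : ℝ) : ℂ) * (s (C *ᵥ u) : ℂ) := by
    rw [← dot_self_eq, ← dot_self_eq, ← dot_self_eq, hFw,
      ← star_dot_mulVec (A - (starRingEnd ℂ) α • 1) u, mulVec_mulVec,
      conjT_factor, key_identity A C hAC α, sub_mulVec, dotProduct_sub]
    congr 1
    · rw [← conjT_den, ← mulVec_mulVec, star_dot_mulVec, hu1]
    · rw [smul_mulVec, dotProduct_smul, ← mulVec_mulVec,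
        star_dot_mulVec C u]
      congr 1
      push_cast
      rw [Complex.mul_conj]
  exact_mod_cast key

lemma s_Fm_le {α : ℂ} (hα : ‖α‖ < 1) (w : Fin n → ℂ) : s (Fm A α *ᵥ w) ≤ s w := by
  rw [s_Fm A C hAC hα]
  have h1 : Complex.normSq α < 1 := by
    have h' : Complex.normSq α = ‖α‖ ^ 2 := by
      rw [Complex.normSq_eq_norm_sq]
    nlinarith [norm_nonneg α]
  nlinarith [s_nonneg (C *ᵥ ((1 - α • A)⁻¹ *ᵥ w))]

lemma Cu_zero {α : ℂ} (hα : ‖α‖ < 1) {w : Fin n → ℂ}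
    (heq : s (Fm A α *ᵥ w) = s w) : C *ᵥ ((1 - α • A)⁻¹ *ᵥ w) = 0 := by
  have h1 : Complex.normSq α < 1 := by
    have h' : Complex.normSq α = ‖α‖ ^ 2 := by
      rw [Complex.normSq_eq_norm_sq]
    nlinarith [norm_nonneg α]
  have := s_Fm A C hAC hα w
  rw [heq] at this
  have h2 : (1 - Complex.normSq α) * s (C *ᵥ ((1 - α • A)⁻¹ *ᵥ w)) = 0 := by linarith
  have h3 : s (C *ᵥ ((1 - α • A)⁻¹ *ᵥ w)) = 0 := by
    rcases mul_eq_zero.mp h2 with h | h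
    · linarith
    · exact h
  exact s_eq_zero h3

lemma step {α : ℂ} (hα : ‖α‖ < 1) {w : Fin n → ℂ}
    (heq : s (Fm A α *ᵥ w) = s w) {z : ℂ} (hz : ‖z‖ < 1) :
    C *ᵥ ((1 - z • A)⁻¹ *ᵥ w) =
      ((z - α) / (1 - (starRingEnd ℂ) α * z)) •
        (C *ᵥ ((1 - z • A)⁻¹ *ᵥ (Fm A α *ᵥ w))) := by
  set c := (starRingEnd ℂ) α with hc
  set u := (1 - α • A)⁻¹ *ᵥ w with hu
  have hu1 : (1 - α • A) *ᵥ u = w := by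
    rw [hu, mulVec_mulVec, mul_nonsing_inv _ (det_unit A C hAC hα), one_mulVec]
  have hFw : Fm A α *ᵥ w = (A - c • 1) *ᵥ u := by
    rw [Fm, ← mulVec_mulVec, hu]
  have hCu : C *ᵥ u = 0 := Cu_zero A C hAC hα heq
  have hkey : (1 - c * z) • ((1 : Matrix (Fin n) (Fin n) ℂ) - α • A) =
      (z - α) • (A - c • 1) + (1 - α * c) • (1 - z • A) := by
    module
  have h1 : (1 - c * z) • w =
      (z - α) • ((A - c • 1) *ᵥ u) + (1 - α * c) • ((1 - z • A) *ᵥ u) := by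
    calc (1 - c * z) • w = ((1 - c * z) • ((1 : Matrix (Fin n) (Fin n) ℂ) - α • A)) *ᵥ u := by
          rw [smul_mulVec, hu1]
      _ = _ := by rw [hkey, add_mulVec, smul_mulVec, smul_mulVec]
  have h2 : (1 - c * z) • ((1 - z • A)⁻¹ *ᵥ w) =
      (z - α) • ((1 - z • A)⁻¹ *ᵥ ((A - c • 1) *ᵥ u)) + (1 - α * c) • u := by
    have h2' : (1 - z • A)⁻¹ *ᵥ ((1 - z • A) *ᵥ u) = u := by
      rw [mulVec_mulVec, nonsing_inv_mul _ (det_unit A C hAC hz), one_mulVec]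
    have := congrArg (fun v => (1 - z • A)⁻¹ *ᵥ v) h1
    simp only [mulVec_add, mulVec_smul] at this
    rw [this, h2']
  have h3 : (1 - c * z) • (C *ᵥ ((1 - z • A)⁻¹ *ᵥ w)) =
      (z - α) • (C *ᵥ ((1 - z • A)⁻¹ *ᵥ (Fm A α *ᵥ w))) := by
    have := congrArg (fun v => C *ᵥ v) h2
    simp only [mulVec_add, mulVec_smul] at this
    rw [this, hFw, hu, hCu, smul_zero, add_zero]
  have hden := den_ne_zero hα hz
  rw [← hc] at hden
  calc C *ᵥ ((1 - z • A)⁻¹ *ᵥ w)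
      = (1 - c * z)⁻¹ • ((1 - c * z) • (C *ᵥ ((1 - z • A)⁻¹ *ᵥ w))) := by
        rw [smul_smul, inv_mul_cancel₀ hden, one_smul]
    _ = ((z - α) / (1 - c * z)) • (C *ᵥ ((1 - z • A)⁻¹ *ᵥ (Fm A α *ᵥ w))) := by
        rw [h3, smul_smul, div_eq_inv_mul]


lemma prod_le (l : List ℂ) (hl : ∀ α ∈ l, ‖α‖ < 1) (x : Fin n → ℂ) :
    s ((l.map (Fm A)).prod *ᵥ x) ≤ s x ∧
    (s ((l.map (Fm A)).prod *ᵥ x) = s x →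
      ∀ z : ℂ, ‖z‖ < 1 →
        C *ᵥ ((1 - z • A)⁻¹ *ᵥ x) =
          (l.map (fun α => (z - α) / (1 - (starRingEnd ℂ) α * z))).prod •
            (C *ᵥ ((1 - z • A)⁻¹ *ᵥ ((l.map (Fm A)).prod *ᵥ x)))) := by
  induction l with
  | nil => simp
  | cons a l ih =>
    have ha : ‖a‖ < 1 := hl a (by simp)
    have hl' : ∀ α ∈ l, ‖α‖ < 1 := fun α hα => hl α (by simp [hα])
    obtain ⟨ih1, ih2⟩ := ih hl'
    set w := (l.map (Fm A)).prod *ᵥ x with hw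
    have hcons : ((a :: l).map (Fm A)).prod *ᵥ x = Fm A a *ᵥ w := by
      rw [List.map_cons, List.prod_cons, ← mulVec_mulVec, hw]
    constructor
    · rw [hcons]; exact le_trans (s_Fm_le A C hAC ha w) ih1
    · intro heq z hz
      rw [hcons] at heq
      have h1 : s (Fm A a *ᵥ w) ≤ s w := s_Fm_le A C hAC ha w
      have hww : s w = s x := le_antisymm ih1 (by linarith)
      have hFeq : s (Fm A a *ᵥ w) = s w := by linarith
      rw [ih2 hww z hz, step A C hAC ha hFeq hz, hcons,
        List.map_cons, List.prod_cons, smul_smul]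
      congr 1
      ring

end withAC
end BlaschkeAux

/-- Part 4 of Lemma 4.2: for a stable unitary realization `(A, B, C, D)` of a
Blaschke product of degree `n` (scalar input/output, `m = 1`), a Blaschke product
`φ` of degree `d < n` and a nonzero `x` with `φ̃(A)ᴴ φ̃(A) x = x` (where
`φ̃(A) = blaschkeMatrix (conj ζ) (conj ∘ α) A = (φ(Aᴴ))ᴴ`), one has `φ̃(A) x ≠ 0`,
`C (I - zA)⁻¹ x = φ(z) · C (I - zA)⁻¹ φ̃(A) x` on the open unit disc, and hence
`φ(z) = (C (I - zA)⁻¹ x)/(C (I - zA)⁻¹ φ̃(A) x)` wherever the denominator is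
nonzero. -/
theorem stmt_14 {n d : ℕ}
    (A : Matrix (Fin n) (Fin n) ℂ) (B : Matrix (Fin n) (Fin 1) ℂ)
    (C : Matrix (Fin 1) (Fin n) ℂ) (D : Matrix (Fin 1) (Fin 1) ℂ)
    (h_unitary : fromBlocks A B C D ∈ Matrix.unitaryGroup (Fin n ⊕ Fin 1) ℂ)
    (h_stable : ∀ μ ∈ spectrum ℂ A, ‖μ‖ < 1)
    (ζ : ℂ) (hζ : ‖ζ‖ = 1) (α : Fin d → ℂ) (hα : ∀ k, ‖α k‖ < 1)
    (hd : d < n)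
    (x : Fin n → ℂ) (hx : x ≠ 0)
    (hx1 : ((blaschkeMatrix ((starRingEnd ℂ) ζ) (fun k => (starRingEnd ℂ) (α k)) A)ᴴ *
        blaschkeMatrix ((starRingEnd ℂ) ζ) (fun k => (starRingEnd ℂ) (α k)) A) *ᵥ x = x) :
    (blaschkeMatrix ((starRingEnd ℂ) ζ) (fun k => (starRingEnd ℂ) (α k)) A) *ᵥ x ≠ 0 ∧
    (∀ z : ℂ, ‖z‖ < 1 →
      (C *ᵥ ((1 - z • A)⁻¹ *ᵥ x)) 0 =
        blaschkeFun ζ α z *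
          (C *ᵥ ((1 - z • A)⁻¹ *ᵥ
            ((blaschkeMatrix ((starRingEnd ℂ) ζ) (fun k => (starRingEnd ℂ) (α k)) A) *ᵥ x))) 0) ∧
    (∀ z : ℂ, ‖z‖ < 1 →
      (C *ᵥ ((1 - z • A)⁻¹ *ᵥ
          ((blaschkeMatrix ((starRingEnd ℂ) ζ) (fun k => (starRingEnd ℂ) (α k)) A) *ᵥ x))) 0 ≠ 0 →
      blaschkeFun ζ α z =
        (C *ᵥ ((1 - z • A)⁻¹ *ᵥ x)) 0 /
          (C *ᵥ ((1 - z • A)⁻¹ *ᵥ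
            ((blaschkeMatrix ((starRingEnd ℂ) ζ) (fun k => (starRingEnd ℂ) (α k)) A) *ᵥ x))) 0) := by
  have hU : (fromBlocks A B C D)ᴴ * fromBlocks A B C D = 1 := h_unitary.1
  have hAC : Aᴴ * A + Cᴴ * C = 1 := by
    rw [fromBlocks_conjTranspose, fromBlocks_multiply] at hU
    have h1 : (fromBlocks (Aᴴ * A + Cᴴ * C) (Aᴴ * B + Cᴴ * D) (Bᴴ * A + Dᴴ * C)
        (Bᴴ * B + Dᴴ * D)).toBlocks₁₁ = ((1 : Matrix (Fin n ⊕ Fin 1) (Fin n ⊕ Fin 1) ℂ)).toBlocks₁₁ := by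
      rw [hU]
    rw [toBlocks_fromBlocks₁₁, ← fromBlocks_one, toBlocks_fromBlocks₁₁] at h1
    exact h1
  set M := blaschkeMatrix ((starRingEnd ℂ) ζ) (fun k => (starRingEnd ℂ) (α k)) A with hMdef
  set G := ((List.ofFn α).map (BlaschkeAux.Fm A)).prod with hGdef
  have hM : M = (starRingEnd ℂ) ζ • G := by
    rw [hMdef, blaschkeMatrix, hGdef, List.map_ofFn]
    have he : (fun k : Fin d => (A - (starRingEnd ℂ) (α k) • 1) *
        (1 - (starRingEnd ℂ) ((starRingEnd ℂ) (α k)) • A)⁻¹) = BlaschkeAux.Fm A ∘ α := by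
      funext k
      simp [BlaschkeAux.Fm, Function.comp, Complex.conj_conj]
    rw [he]
  have hζ1 : ζ * (starRingEnd ℂ) ζ = 1 := by
    rw [Complex.mul_conj]
    norm_cast
    rw [Complex.normSq_eq_norm_sq, hζ]
    norm_num
  have hMx' : ∀ v : Fin n → ℂ, M *ᵥ v = (starRingEnd ℂ) ζ • (G *ᵥ v) := by
    intro v
    rw [hM, smul_mulVec]
  have hsMx : BlaschkeAux.s (M *ᵥ x) = BlaschkeAux.s x := by
    have key : (BlaschkeAux.s (M *ᵥ x) : ℂ) = (BlaschkeAux.s x : ℂ) := by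
      rw [← BlaschkeAux.dot_self_eq, ← BlaschkeAux.dot_self_eq,
        ← BlaschkeAux.star_dot_mulVec M x (M *ᵥ x), mulVec_mulVec, hx1]
    exact_mod_cast key
  have hsGx : BlaschkeAux.s (G *ᵥ x) = BlaschkeAux.s x := by
    have h2 : BlaschkeAux.s (M *ᵥ x) =
        Complex.normSq ((starRingEnd ℂ) ζ) * BlaschkeAux.s (G *ᵥ x) := by
      rw [hMx' x, BlaschkeAux.s_smul]
    have hnζ : Complex.normSq ((starRingEnd ℂ) ζ) = 1 := by
      rw [Complex.normSq_conj, Complex.normSq_eq_norm_sq, hζ]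
      norm_num
    rw [hnζ, one_mul] at h2
    rw [← h2, hsMx]
  have hαl : ∀ a ∈ List.ofFn α, ‖a‖ < 1 := by
    intro a ha
    obtain ⟨k, rfl⟩ := List.mem_ofFn.mp ha
    exact hα k
  have hpart2 : ∀ z : ℂ, ‖z‖ < 1 →
      (C *ᵥ ((1 - z • A)⁻¹ *ᵥ x)) 0 =
        blaschkeFun ζ α z * (C *ᵥ ((1 - z • A)⁻¹ *ᵥ (M *ᵥ x))) 0 := by
    intro z hz
    have key := (BlaschkeAux.prod_le A C hAC (List.ofFn α) hαl x).2 hsGx z hz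
    rw [← hGdef] at key
    have hP : ((List.ofFn α).map (fun a => (z - a) / (1 - (starRingEnd ℂ) a * z))).prod =
        ∏ k : Fin d, (z - α k) / (1 - (starRingEnd ℂ) (α k) * z) := by
      rw [List.map_ofFn, List.prod_ofFn]
      rfl
    rw [key, hMx' x, mulVec_smul, mulVec_smul, hP]
    simp only [Pi.smul_apply, smul_eq_mul, blaschkeFun]
    set Q := ∏ k : Fin d, (z - α k) / (1 - (starRingEnd ℂ) (α k) * z) with hQ
    set t := (C *ᵥ ((1 - z • A)⁻¹ *ᵥ (G *ᵥ x))) 0 with ht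
    linear_combination (-(Q * t)) * hζ1
  refine ⟨?_, hpart2, ?_⟩
  · intro h0
    apply hx
    have hxe : x = Mᴴ *ᵥ (M *ᵥ x) := by rw [mulVec_mulVec]; exact hx1.symm
    rw [hxe, h0, mulVec_zero]
  · intro z hz hne
    rw [hpart2 z hz, mul_div_assoc, div_self hne, mul_one]
end

section
/- Let A be an n×n complex matrix with all eigenvalues in the open unit disc and B an n×m complex matrix such that A Aᴴ + B Bᴴ = I. Then the series ∑_{k=0}^{∞} A^k B Bᴴ (Aᴴ)^k is summable with sum equal to the identity matrix: ∑_{k=0}^{∞} A^k B Bᴴ (Aᴴ)^k = I. Equivalently, the controllability operator Υ = [B, A B, A² B, …] is a co-isometry, Υ Υ* = I. -/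
open Matrix
open scoped NNReal ENNReal

attribute [local instance] Matrix.frobeniusNormedRing Matrix.frobeniusNormedAlgebra

open Filter in
/-- If all eigenvalues of `M` have norm `< 1`, then `‖M ^ k‖₊` is eventually
bounded by a geometric sequence with ratio `< 1`. -/
lemma stmt_15_aux {N : ℕ} (M : Matrix (Fin N) (Fin N) ℂ)
    (hM : ∀ μ ∈ spectrum ℂ M, ‖μ‖ < 1) :
    ∃ r : ℝ≥0, r < 1 ∧ ∀ᶠ k in atTop, ‖M ^ k‖₊ ≤ r ^ k := by
  have hρ : spectralRadius ℂ M < 1 := by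
    rcases (spectrum ℂ M).eq_empty_or_nonempty with h | h
    · simp [spectralRadius, h]
    · have : spectralRadius ℂ M < ((1 : ℝ≥0) : ℝ≥0∞) := by
        refine spectrum.spectralRadius_lt_of_forall_lt_of_nonempty h fun z hz => ?_
        have := hM z hz
        rwa [← coe_nnnorm, ← NNReal.coe_one, NNReal.coe_lt_coe] at this
      simpa using this
  obtain ⟨r, hr1, hr2⟩ := ENNReal.lt_iff_exists_nnreal_btwn.mp hρ
  have hrlt : r < 1 := by exact_mod_cast hr2
  refine ⟨r, hrlt, ?_⟩
  have hg := spectrum.pow_nnnorm_pow_one_div_tendsto_nhds_spectralRadius M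
  have hev := hg.eventually_lt_const hr1
  filter_upwards [hev, eventually_ge_atTop 1] with k hk hk1
  have hk0 : (k : ℝ) ≠ 0 := by positivity
  have := ENNReal.rpow_lt_rpow hk (by positivity : (0:ℝ) < (k:ℝ))
  rw [← ENNReal.rpow_mul, one_div, inv_mul_cancel₀ hk0, ENNReal.rpow_one,
    ENNReal.rpow_natCast] at this
  have : (‖M ^ k‖₊ : ℝ≥0∞) < ((r ^ k : ℝ≥0) : ℝ≥0∞) := by
    simpa [ENNReal.coe_pow] using this
  exact_mod_cast this.le

/-- If `A` is stable and `A Aᴴ + B Bᴴ = I`, then `∑ₖ Aᵏ B Bᴴ (Aᴴ)ᵏ = I`;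
equivalently, the controllability operator `Υ = [B, AB, A²B, …]` is a
co-isometry. -/
theorem stmt_15 {n m : ℕ}
    (A : Matrix (Fin n) (Fin n) ℂ) (B : Matrix (Fin n) (Fin m) ℂ)
    (hA : ∀ μ ∈ spectrum ℂ A, ‖μ‖ < 1)
    (hAB : A * Aᴴ + B * Bᴴ = 1) :
    HasSum (fun k : ℕ => A ^ k * (B * Bᴴ) * Aᴴ ^ k) 1 := by
  classical
  have hC : B * Bᴴ = 1 - A * Aᴴ := by
    rw [← hAB]; abel
  have hA' : ∀ μ ∈ spectrum ℂ Aᴴ, ‖μ‖ < 1 := by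
    intro μ hμ
    rw [← Matrix.star_eq_conjTranspose, spectrum.map_star, Set.mem_star] at hμ
    simpa using hA (star μ) hμ
  obtain ⟨r, hr, hre⟩ := stmt_15_aux A hA
  obtain ⟨s, hs, hse⟩ := stmt_15_aux Aᴴ hA'
  have hrs : (r : ℝ) * s < 1 := by
    have h1 : (r : ℝ) < 1 := by exact_mod_cast hr
    have h2 : (s : ℝ) < 1 := by exact_mod_cast hs
    nlinarith [r.coe_nonneg, s.coe_nonneg]
  have hrs0 : (0 : ℝ) ≤ (r : ℝ) * s := by positivity
  -- eventual geometric bound on the terms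
  have hbound : ∀ᶠ k in Filter.atTop,
      ‖A ^ k * (B * Bᴴ) * Aᴴ ^ k‖ ≤ ‖B * Bᴴ‖ * ((r : ℝ) * s) ^ k := by
    filter_upwards [hre, hse] with k h1 h2
    have h1' : ‖A ^ k‖ ≤ (r : ℝ) ^ k := by exact_mod_cast h1
    have h2' : ‖Aᴴ ^ k‖ ≤ (s : ℝ) ^ k := by exact_mod_cast h2
    calc ‖A ^ k * (B * Bᴴ) * Aᴴ ^ k‖
        ≤ ‖A ^ k * (B * Bᴴ)‖ * ‖Aᴴ ^ k‖ := norm_mul_le _ _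
      _ ≤ ‖A ^ k‖ * ‖B * Bᴴ‖ * ‖Aᴴ ^ k‖ :=
          mul_le_mul_of_nonneg_right (norm_mul_le _ _) (norm_nonneg _)
      _ ≤ (r : ℝ) ^ k * ‖B * Bᴴ‖ * (s : ℝ) ^ k := by
          gcongr
      _ = ‖B * Bᴴ‖ * ((r : ℝ) * s) ^ k := by ring
  have hsum : Summable (fun k : ℕ => A ^ k * (B * Bᴴ) * Aᴴ ^ k) := by
    refine Summable.of_norm_bounded_eventually_nat ?_ hbound
    exact (summable_geometric_of_lt_one hrs0 hrs).mul_left _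
  -- partial sums telescope
  have hterm : ∀ k : ℕ, A ^ k * (B * Bᴴ) * Aᴴ ^ k
      = A ^ k * Aᴴ ^ k - A ^ (k + 1) * Aᴴ ^ (k + 1) := by
    intro k
    rw [hC, mul_sub, sub_mul, mul_one, pow_succ A, pow_succ' Aᴴ]
    simp [mul_assoc]
  have hpart : ∀ N : ℕ, ∑ k ∈ Finset.range N, A ^ k * (B * Bᴴ) * Aᴴ ^ k
      = 1 - A ^ N * Aᴴ ^ N := by
    intro N
    calc ∑ k ∈ Finset.range N, A ^ k * (B * Bᴴ) * Aᴴ ^ k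
        = ∑ k ∈ Finset.range N, (A ^ k * Aᴴ ^ k - A ^ (k + 1) * Aᴴ ^ (k + 1)) :=
          Finset.sum_congr rfl fun k _ => hterm k
      _ = A ^ 0 * Aᴴ ^ 0 - A ^ N * Aᴴ ^ N := Finset.sum_range_sub' _ N
      _ = 1 - A ^ N * Aᴴ ^ N := by simp
  have h0 : Filter.Tendsto (fun N : ℕ => A ^ N * Aᴴ ^ N) Filter.atTop (nhds 0) := by
    refine squeeze_zero_norm' ?_ (tendsto_pow_atTop_nhds_zero_of_lt_one hrs0 hrs)
    filter_upwards [hre, hse] with k h1 h2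
    have h1' : ‖A ^ k‖ ≤ (r : ℝ) ^ k := by exact_mod_cast h1
    have h2' : ‖Aᴴ ^ k‖ ≤ (s : ℝ) ^ k := by exact_mod_cast h2
    calc ‖A ^ k * Aᴴ ^ k‖ ≤ ‖A ^ k‖ * ‖Aᴴ ^ k‖ := norm_mul_le _ _
      _ ≤ (r : ℝ) ^ k * (s : ℝ) ^ k := by gcongr
      _ = ((r : ℝ) * s) ^ k := (mul_pow _ _ _).symm
  have hT : Filter.Tendsto (fun N : ℕ => ∑ k ∈ Finset.range N, A ^ k * (B * Bᴴ) * Aᴴ ^ k)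
      Filter.atTop (nhds 1) := by
    simp only [hpart]
    simpa using tendsto_const_nhds.sub h0
  have hH := hsum.hasSum
  have := tendsto_nhds_unique hH.tendsto_sum_nat hT
  rwa [this] at hH
end
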